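/- arXiv:2305.06123 — 2 statements merged into one kernel-verified Lean document; each statement's English description precedes it below -/
import Mathlib

section
/- In a DAG layered into rounds where every vertex in round r + 1 has strong edges to at least ⌊n/2⌋ + 1 vertices of round r (out of at most n vertices per round), if a vertex v in round r₀ is reachable via strong paths from at least ⌊n/2⌋ + 1 vertices of round r₀' ≥ r₀ (a quorum set U in round r₀'), then every vertex in any round r > r₀' has a strong path to v. -/
open Finset Relation

/-- Strong-path reachability: a (possibly empty) chain of strong edges. -/
def strongPath {V : Type*} [DecidableEq V] (strong : V → Finset V) : V → V → Prop :=
  ReflTransGen fun a b => b ∈ strong a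

theorem all_later_vertices_reach_leader
    {V : Type*} [DecidableEq V] [Fintype V] (n : ℕ)
    (round : V → ℕ) (strong : V → Finset V)
    -- strong edges point exactly one round back
    (hedge : ∀ u v : V, v ∈ strong u → round v + 1 = round u)
    -- at most n vertices per round
    (hround : ∀ r : ℕ, (Finset.univ.filter fun w => round w = r).card ≤ n)
    (r₀ r₀' : ℕ) (hrr : r₀ ≤ r₀') (v : V) (hv : round v = r₀)
    -- every vertex in a round beyond r₀' has at least ⌊n/2⌋+1 strong edges
    (hquorumEdges : ∀ u : V, round u > r₀' → (strong u).card ≥ n / 2 + 1)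
    -- a quorum U of round-r₀' vertices with strong paths to v
    (U : Finset V) (hU : ∀ u ∈ U, round u = r₀') (hUcard : U.card ≥ n / 2 + 1)
    (hUpath : ∀ u ∈ U, strongPath strong u v) :
    ∀ w : V, round w > r₀' → strongPath strong w v := by
  have key : ∀ k : ℕ, ∀ w : V, round w = r₀' + 1 + k → strongPath strong w v := by
    intro k
    induction k with
    | zero =>
      intro w hw
      have hcard : (strong w).card ≥ n / 2 + 1 := hquorumEdges w (by omega)
      have hsub1 : strong w ⊆ Finset.univ.filter (fun x => round x = r₀') := by
        intro x hx
        simp only [Finset.mem_filter, Finset.mem_univ, true_and]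
        have := hedge w x hx
        omega
      have hsub2 : U ⊆ Finset.univ.filter (fun x => round x = r₀') := by
        intro x hx
        simp only [Finset.mem_filter, Finset.mem_univ, true_and]
        exact hU x hx
      have hun : (strong w ∪ U).card ≤ n :=
        le_trans (Finset.card_le_card (Finset.union_subset hsub1 hsub2)) (hround r₀')
      have hint : (strong w ∩ U).Nonempty := by
        rw [← Finset.card_pos]
        have := Finset.card_union_add_card_inter (strong w) U
        omega
      obtain ⟨x, hx⟩ := hint
      rw [Finset.mem_inter] at hx
      exact ReflTransGen.head hx.1 (hUpath x hx.2)
    | succ k ih =>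
      intro w hw
      have hcard : (strong w).card ≥ n / 2 + 1 := hquorumEdges w (by omega)
      have hne : (strong w).Nonempty := by
        rw [← Finset.card_pos]; omega
      obtain ⟨x, hx⟩ := hne
      have hrx : round x = r₀' + 1 + k := by
        have := hedge w x hx
        omega
      exact ReflTransGen.head hx (ih x hrx)
  intro w hw
  exact key (round w - r₀' - 1) w (by omega)
end

section
/- (Common core / get-core) In a layered DAG over rounds 1–4 of a wave, where each round has vertices indexed by a subset of n processes, each vertex of round r + 1 has strong edges to at least ⌊n/2⌋ + 1 distinct vertices of round r, and from round 3 to round 4 every round-4 vertex's strong-edge set intersects any fixed set of size ⌊n/2⌋ + 1 among round-3 vertices, there exist sets V₁ of round-1 vertices and V₄ of round-4 vertices, each of size at least ⌊n/2⌋ + 1, such that every vertex of V₄ has a strong path to every vertex of V₁. -/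
open Finset Relation

theorem get_core
    {V : Type*} [DecidableEq V] [Fintype V] (n : ℕ)
    (round : V → ℕ) (strong : V → Finset V)
    -- each of rounds 1–4 has at most n vertices
    (hround : ∀ r : ℕ, (Finset.univ.filter fun w => round w = r).card ≤ n)
    -- strong edges point exactly one round back
    (hedge : ∀ u v : V, v ∈ strong u → round v + 1 = round u)
    -- each vertex of rounds 2,3,4 has at least ⌊n/2⌋+1 strong edges
    (hquorumEdges : ∀ u : V, 2 ≤ round u → round u ≤ 4 → (strong u).card ≥ n / 2 + 1)
    -- round 4 contains at least ⌊n/2⌋+1 vertices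
    (hfour : (Finset.univ.filter fun w => round w = 4).card ≥ n / 2 + 1)
    -- every round-4 vertex's strong-edge set meets any quorum of round-3 vertices
    (hmeet : ∀ w : V, round w = 4 → ∀ S : Finset V, (∀ u ∈ S, round u = 3) →
      S.card ≥ n / 2 + 1 → (strong w ∩ S).Nonempty) :
    ∃ V₁ V₄ : Finset V,
      (∀ u ∈ V₁, round u = 1) ∧ (∀ u ∈ V₄, round u = 4) ∧
      V₁.card ≥ n / 2 + 1 ∧ V₄.card ≥ n / 2 + 1 ∧
      ∀ v₄ ∈ V₄, ∀ v₁ ∈ V₁, strongPath strong v₄ v₁ := by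
  classical
  set h := n / 2 with hh
  set R : ℕ → Finset V := fun r => Finset.univ.filter fun w => round w = r with hR
  -- membership in R r
  have hmemR : ∀ (r : ℕ) (w : V), w ∈ R r ↔ round w = r := by
    intro r w; simp [hR]
  -- strong sets land entirely in the previous round
  have hsub : ∀ (u : V) (r : ℕ), round u = r + 1 → strong u ⊆ R r := by
    intro u r hr v hv
    rw [hmemR]
    have := hedge u v hv
    omega
  -- round 4 is nonempty
  have hR4 : R 4 = Finset.univ.filter fun w => round w = 4 := rfl
  have hR4card : (R 4).card ≥ h + 1 := hfour
  obtain ⟨w₄, hw₄⟩ : (R 4).Nonempty := Finset.card_pos.mp (by omega)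
  have hw₄r : round w₄ = 4 := (hmemR 4 w₄).mp hw₄
  -- R 3 contains a quorum
  have hsw₄ : strong w₄ ⊆ R 3 := hsub w₄ 3 hw₄r
  have hcw₄ : (strong w₄).card ≥ h + 1 := hquorumEdges w₄ (by omega) (by omega)
  have hR3card : h + 1 ≤ (R 3).card :=
    le_trans hcw₄ (Finset.card_le_card hsw₄)
  have hR3n : (R 3).card ≤ n := hround 3
  have hR2n : (R 2).card ≤ n := hround 2
  have hn0 : 0 < n := by
    by_contra hn
    have := hround 4
    omega
  -- double counting: find a hub u₂ in round 2 with large fan in round 3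
  have key : ∃ u₂ ∈ R 2, (R 3).card ≤ ((R 3).filter fun b => u₂ ∈ strong b).card + h := by
    by_contra hcon
    push_neg at hcon
    have hbound : ∀ a ∈ R 2, ((R 3).filter fun b => a ∈ strong b).card
        ≤ (R 3).card - (h + 1) := by
      intro a ha
      have := hcon a ha
      omega
    have hsum1 : (∑ a ∈ R 2, ((R 3).filter fun b => a ∈ strong b).card)
        ≤ (R 2).card * ((R 3).card - (h + 1)) := by
      calc (∑ a ∈ R 2, ((R 3).filter fun b => a ∈ strong b).card)
          ≤ ∑ _a ∈ R 2, ((R 3).card - (h + 1)) := Finset.sum_le_sum hbound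
        _ = (R 2).card * ((R 3).card - (h + 1)) := by
            rw [Finset.sum_const, smul_eq_mul]
    -- the same sum equals the total number of strong edges out of R 3
    have hswap : (∑ a ∈ R 2, ((R 3).filter fun b => a ∈ strong b).card)
        = ∑ b ∈ R 3, (strong b).card := by
      have : ∀ a ∈ R 2, ((R 3).filter fun b => a ∈ strong b).card
          = ∑ b ∈ R 3, if a ∈ strong b then 1 else 0 := by
        intro a _; rw [Finset.card_filter]
      rw [Finset.sum_congr rfl this, Finset.sum_comm]
      apply Finset.sum_congr rfl
      intro b hb
      have hbs : strong b ⊆ R 2 := hsub b 2 (by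
        have := (hmemR 3 b).mp hb; omega)
      have : ∑ a ∈ R 2, (if a ∈ strong b then 1 else 0)
          = ((R 2).filter fun a => a ∈ strong b).card := by
        rw [Finset.card_filter]
      rw [this]
      congr 1
      apply Finset.Subset.antisymm
      · intro a ha; exact (Finset.mem_filter.mp ha).2
      · intro a ha; exact Finset.mem_filter.mpr ⟨hbs ha, ha⟩
    have hsum2 : (R 3).card * (h + 1) ≤ ∑ b ∈ R 3, (strong b).card := by
      calc (R 3).card * (h + 1) = ∑ _b ∈ R 3, (h + 1) := by
            rw [Finset.sum_const, smul_eq_mul]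
        _ ≤ ∑ b ∈ R 3, (strong b).card := by
            apply Finset.sum_le_sum
            intro b hb
            have hbr := (hmemR 3 b).mp hb
            exact hquorumEdges b (by omega) (by omega)
    -- combine: (R 3).card * (h + 1) ≤ (R 2).card * ((R 3).card - (h + 1))
    have hfin : (R 3).card * (h + 1) ≤ n * ((R 3).card - (h + 1)) := by
      calc (R 3).card * (h + 1) ≤ (R 2).card * ((R 3).card - (h + 1)) := by
            omega
        _ ≤ n * ((R 3).card - (h + 1)) :=
            Nat.mul_le_mul_right _ hR2n
    -- contradiction: set t = (R 3).card - (h+1)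
    obtain ⟨t, ht⟩ : ∃ t, (R 3).card = (h + 1) + t := ⟨(R 3).card - (h + 1), by omega⟩
    rw [ht] at hfin hR3n
    have h2 : 2 * (h + 1) > n := by omega
    have : ((h + 1) + t) * (h + 1) = (h+1)*(h+1) + t*(h+1) := by ring
    rw [this] at hfin
    have hnt : n * ((h + 1) + t - (h + 1)) = n * t := by
      congr 1; omega
    rw [hnt] at hfin
    -- n * t = (h+1)*t + (n - (h+1)) * t, and n - (h+1) ≤ h, t ≤ h
    have htn : t ≤ h := by omega
    have hnh : n ≤ 2 * h + 1 := by omega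
    nlinarith [Nat.mul_le_mul htn (show n - (h+1) ≤ h by omega),
      Nat.sub_add_cancel (show h + 1 ≤ n by omega)]
  obtain ⟨u₂, hu₂R, hu₂fan⟩ := key
  have hu₂r : round u₂ = 2 := (hmemR 2 u₂).mp hu₂R
  refine ⟨strong u₂, R 4, ?_, ?_, ?_, hfour, ?_⟩
  · intro v hv
    have := hedge u₂ v hv; omega
  · intro u hu; exact (hmemR 4 u).mp hu
  · exact hquorumEdges u₂ (by omega) (by omega)
  · intro v₄ hv₄ v₁ hv₁
    have hv₄r : round v₄ = 4 := (hmemR 4 v₄).mp hv₄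
    have hsv₄ : strong v₄ ⊆ R 3 := hsub v₄ 3 hv₄r
    have hcv₄ : (strong v₄).card ≥ h + 1 := hquorumEdges v₄ (by omega) (by omega)
    -- strong v₄ meets the fan of u₂
    set F : Finset V := (R 3).filter fun b => u₂ ∈ strong b with hF
    have hFsub : F ⊆ R 3 := Finset.filter_subset _ _
    have hunion : (strong v₄ ∪ F).card ≤ (R 3).card :=
      Finset.card_le_card (Finset.union_subset hsv₄ hFsub)
    have hinter : 0 < (strong v₄ ∩ F).card := by
      have := Finset.card_union_add_card_inter (strong v₄) F
      omega
    obtain ⟨u₃, hu₃⟩ := Finset.card_pos.mp hinter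
    rw [Finset.mem_inter] at hu₃
    obtain ⟨hu₃s, hu₃F⟩ := hu₃
    have hu₃fan : u₂ ∈ strong u₃ := (Finset.mem_filter.mp hu₃F).2
    exact ReflTransGen.head hu₃s (ReflTransGen.head hu₃fan (ReflTransGen.single hv₁))
end
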